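/- For every finite simple graph G and every integer k ≥ 1, the cutwidth of the k-stretch satisfies ctw(^kG) ≤ ctw(G). -/
import Mathlib


noncomputable section

/-- The cutwidth of a finite simple graph: the minimum over all linear orderings
(cut decompositions) `f : V ≃ Fin |V|` of the vertex set of the maximum number
of edges crossing a cut, where an edge `{u, v}` crosses the `i`-th cut if
`f u ≤ i < f v`. -/
def cutwidth {V : Type*} [Finite V] (G : SimpleGraph V) : ℕ :=
  sInf {w | ∃ f : V ≃ Fin (Nat.card V), ∀ i : ℕ,
    {e | e ∈ G.edgeSet ∧ ∃ u v, e = s(u, v) ∧ (f u : ℕ) ≤ i ∧ i < (f v : ℕ)}.ncard ≤ w}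

/-- The `j`-th vertex (for `0 ≤ j ≤ k`) on the path of length `k` replacing the
edge `e = {u, v}` (with `u ≤ v`) in the `k`-stretch: the endpoints `u`, `v` for
`j = 0`, `j = k`, and the `k - 1` new internal vertices in between. -/
def stretchNode {V : Type*} [LinearOrder V] (G : SimpleGraph V) (k : ℕ)
    (e : G.edgeSet) (j : ℕ) : V ⊕ (G.edgeSet × Fin (k - 1)) :=
  if h0 : j = 0 then Sum.inl (e : Sym2 V).inf
  else if h : j < k then Sum.inr (e, ⟨j - 1, by omega⟩)
  else Sum.inl (e : Sym2 V).sup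

/-- The `k`-stretch of `G`: every edge of `G` is replaced by a path with `k`
edges through `k - 1` new internal vertices. -/
def stretch {V : Type*} [LinearOrder V] (G : SimpleGraph V) (k : ℕ) :
    SimpleGraph (V ⊕ (G.edgeSet × Fin (k - 1))) :=
  SimpleGraph.fromEdgeSet
    {p | ∃ (e : G.edgeSet) (j : ℕ), j < k ∧
      p = s(stretchNode G k e j, stretchNode G k e (j + 1))}

/-! ### Auxiliary lemmas -/

lemma cutwidth_le_of_key {W : Type*} [Finite W] (H : SimpleGraph W)
    (key : W → ℕ) (hinj : Function.Injective key) (c : ℕ)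
    (hc : ∀ i : ℕ,
      {e | e ∈ H.edgeSet ∧ ∃ u v, e = s(u, v) ∧ key u ≤ i ∧ i < key v}.ncard ≤ c) :
    cutwidth H ≤ c := by
  letI : Fintype W := Fintype.ofFinite W
  letI lo : LinearOrder W := LinearOrder.lift' key hinj
  have hcard : Fintype.card W = Nat.card W := (Nat.card_eq_fintype_card).symm
  set φ := monoEquivOfFin W hcard with hφ
  have hle : ∀ a b : W, a ≤ b ↔ key a ≤ key b := fun a b => Iff.rfl
  have hlt : ∀ a b : W, a < b ↔ key a < key b := fun a b => Iff.rfl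
  refine Nat.sInf_le ⟨φ.toEquiv.symm, fun i => ?_⟩
  by_cases hi : i < Nat.card W
  · set m := key (φ ⟨i, hi⟩) with hm
    have key1 : ∀ u : W, ((φ.toEquiv.symm u : Fin (Nat.card W)) : ℕ) ≤ i ↔ key u ≤ m := by
      intro u
      have h1 : φ.toEquiv.symm u ≤ ⟨i, hi⟩ ↔ u ≤ φ ⟨i, hi⟩ := by
        rw [← φ.le_iff_le]; simp
      rw [← hle, ← h1, Fin.le_def]
    have key2 : ∀ v : W, i < ((φ.toEquiv.symm v : Fin (Nat.card W)) : ℕ) ↔ m < key v := by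
      intro v
      have h1 : (⟨i, hi⟩ : Fin (Nat.card W)) < φ.toEquiv.symm v ↔ φ ⟨i, hi⟩ < v := by
        rw [← φ.lt_iff_lt]; simp
      rw [← hlt, ← h1, Fin.lt_def]
    have hsets : {e | e ∈ H.edgeSet ∧ ∃ u v, e = s(u, v) ∧ ((φ.toEquiv.symm u : Fin (Nat.card W)) : ℕ) ≤ i ∧ i < ((φ.toEquiv.symm v : Fin (Nat.card W)) : ℕ)}
        = {e | e ∈ H.edgeSet ∧ ∃ u v, e = s(u, v) ∧ key u ≤ m ∧ m < key v} := by
      ext e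
      simp only [Set.mem_setOf_eq]
      constructor
      · rintro ⟨he, u, v, rfl, h1, h2⟩
        exact ⟨he, u, v, rfl, (key1 u).mp h1, (key2 v).mp h2⟩
      · rintro ⟨he, u, v, rfl, h1, h2⟩
        exact ⟨he, u, v, rfl, (key1 u).mpr h1, (key2 v).mpr h2⟩
    rw [hsets]; exact hc m
  · have hempty : {e | e ∈ H.edgeSet ∧ ∃ u v, e = s(u, v) ∧ ((φ.toEquiv.symm u : Fin (Nat.card W)) : ℕ) ≤ i ∧ i < ((φ.toEquiv.symm v : Fin (Nat.card W)) : ℕ)} = ∅ := by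
      ext e
      simp only [Set.mem_setOf_eq, Set.mem_empty_iff_false, iff_false, not_and]
      rintro _ ⟨u, v, _, _, hv⟩
      exact absurd hv (not_lt.mpr ((Fin.is_lt _).le.trans (not_lt.mp hi)))
    rw [hempty]; simp

lemma exists_opt_order {V : Type*} [Finite V] (G : SimpleGraph V) :
    ∃ f : V ≃ Fin (Nat.card V), ∀ i : ℕ,
      {e | e ∈ G.edgeSet ∧ ∃ u v, e = s(u, v) ∧ (f u : ℕ) ≤ i ∧ i < (f v : ℕ)}.ncard
        ≤ cutwidth G := by
  have hne : {w | ∃ f : V ≃ Fin (Nat.card V), ∀ i : ℕ,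
      {e | e ∈ G.edgeSet ∧ ∃ u v, e = s(u, v) ∧ (f u : ℕ) ≤ i ∧ i < (f v : ℕ)}.ncard ≤ w}.Nonempty := by
    refine ⟨G.edgeSet.ncard, Finite.equivFin V, fun i => ?_⟩
    exact Set.ncard_le_ncard (fun e he => he.1) (Set.toFinite _)
  have := Nat.sInf_mem hne
  exact this

section Construction

variable {V : Type*} [Finite V] [LinearOrder V] {G : SimpleGraph V}

lemma sym2_mk_inf_sup (x : Sym2 V) : s(x.inf, x.sup) = x := by
  induction x using Sym2.ind with
  | _ a b =>
    rcases le_total a b with h | h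
    · simp [inf_eq_left.mpr h, sup_eq_right.mpr h]
    · rw [Sym2.inf_mk, Sym2.sup_mk, inf_eq_right.mpr h, sup_eq_left.mpr h, Sym2.eq_swap]

lemma sym2_inf_ne_sup {x : Sym2 V} (hx : ¬ x.IsDiag) : x.inf ≠ x.sup := by
  induction x using Sym2.ind with
  | _ a b =>
    rw [Sym2.mk_isDiag_iff] at hx
    rw [Sym2.inf_mk, Sym2.sup_mk]
    rcases le_total a b with h | h
    · rw [inf_eq_left.mpr h, sup_eq_right.mpr h]; exact hx
    · rw [inf_eq_right.mpr h, sup_eq_left.mpr h]; exact fun hh => hx hh.symm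

variable (k : ℕ) (f : V ≃ Fin (Nat.card V))

/-- index of an edge -/
def eidx (e : G.edgeSet) : ℕ := (Finite.equivFin G.edgeSet e : ℕ)

def bigK (G : SimpleGraph V) (k : ℕ) : ℕ := Nat.card G.edgeSet * (k - 1) + 1

def fi (e : G.edgeSet) : ℕ := (f (e : Sym2 V).inf : ℕ)
def fs (e : G.edgeSet) : ℕ := (f (e : Sym2 V).sup : ℕ)
def lowp (e : G.edgeSet) : ℕ := min (fi f e) (fs f e)
def highp (e : G.edgeSet) : ℕ := max (fi f e) (fs f e)

def skey : V ⊕ (G.edgeSet × Fin (k - 1)) → ℕ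
  | .inl v => (f v : ℕ) * bigK G k
  | .inr (e, t) => lowp f e * bigK G k + 1 + eidx e * (k - 1) +
      (if fi f e ≤ fs f e then (t : ℕ) else k - 2 - (t : ℕ))

def sseq (e : G.edgeSet) (j : ℕ) : V ⊕ (G.edgeSet × Fin (k - 1)) :=
  stretchNode G k e (if fi f e ≤ fs f e then j else k - j)

variable {k f}

lemma node_zero (e : G.edgeSet) : stretchNode G k e 0 = Sum.inl (e : Sym2 V).inf := by
  unfold stretchNode; rw [dif_pos rfl]

lemma node_top (hk : 1 ≤ k) (e : G.edgeSet) :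
    stretchNode G k e k = Sum.inl (e : Sym2 V).sup := by
  unfold stretchNode; rw [dif_neg (by omega), dif_neg (by omega)]

lemma node_mid (e : G.edgeSet) {j : ℕ} (h1 : 0 < j) (h2 : j < k) :
    stretchNode G k e j = Sum.inr (e, ⟨j - 1, by omega⟩) := by
  unfold stretchNode; rw [dif_neg (by omega), dif_pos h2]

lemma fi_ne_fs (e : G.edgeSet) : fi f e ≠ fs f e := by
  intro h
  have h2 : (e : Sym2 V).inf = (e : Sym2 V).sup :=
    f.injective (Fin.val_injective h)
  exact sym2_inf_ne_sup (SimpleGraph.not_isDiag_of_mem_edgeSet G e.2) h2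

lemma lowp_lt_highp (e : G.edgeSet) : lowp f e < highp f e := by
  have := fi_ne_fs (f := f) e
  unfold lowp highp
  omega

lemma skey_seq_zero (hk : 1 ≤ k) (e : G.edgeSet) :
    skey k f (sseq k f e 0) = lowp f e * bigK G k := by
  unfold sseq
  by_cases h : fi f e ≤ fs f e
  · rw [if_pos h, node_zero, skey]
    have : lowp f e = fi f e := min_eq_left h
    rw [this]; rfl
  · rw [if_neg h]
    simp only [Nat.sub_zero]
    rw [node_top hk, skey]
    have : lowp f e = fs f e := min_eq_right (le_of_not_ge h)
    rw [this]; rfl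

lemma skey_seq_top (hk : 1 ≤ k) (e : G.edgeSet) :
    skey k f (sseq k f e k) = highp f e * bigK G k := by
  unfold sseq
  by_cases h : fi f e ≤ fs f e
  · rw [if_pos h, node_top hk, skey]
    have : highp f e = fs f e := max_eq_right h
    rw [this]; rfl
  · rw [if_neg h]
    simp only [Nat.sub_self]
    rw [node_zero, skey]
    have : highp f e = fi f e := max_eq_left (le_of_not_ge h)
    rw [this]; rfl

lemma skey_seq_mid (e : G.edgeSet) {j : ℕ} (h1 : 0 < j) (h2 : j < k) :
    skey k f (sseq k f e j) =
      lowp f e * bigK G k + 1 + eidx e * (k - 1) + (j - 1) := by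
  unfold sseq
  by_cases h : fi f e ≤ fs f e
  · rw [if_pos h, node_mid e h1 h2, skey, if_pos h]
  · rw [if_neg h, node_mid e (by omega) (by omega), skey, if_neg h]
    congr 1
    simp only []
    omega

lemma eidx_lt (e : G.edgeSet) : eidx e < Nat.card G.edgeSet := by
  unfold eidx
  exact (Finite.equivFin G.edgeSet e).isLt

lemma skey_mid_lt (e : G.edgeSet) {j : ℕ} (h1 : 0 < j) (h2 : j < k) :
    skey k f (sseq k f e j) < (lowp f e + 1) * bigK G k := by
  rw [skey_seq_mid e h1 h2]
  have he := eidx_lt e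
  have hK : 1 + eidx e * (k - 1) + (j - 1) < bigK G k := by
    unfold bigK
    have h3 : eidx e * (k - 1) + (j - 1) < (eidx e + 1) * (k - 1) := by
      rw [add_mul, one_mul]
      omega
    have h4 : (eidx e + 1) * (k - 1) ≤ Nat.card G.edgeSet * (k - 1) :=
      Nat.mul_le_mul_right _ (by omega)
    omega
  rw [add_mul, one_mul]
  omega

lemma skey_mono (hk : 1 ≤ k) (e : G.edgeSet) {j : ℕ} (hj : j < k) :
    skey k f (sseq k f e j) < skey k f (sseq k f e (j + 1)) := by
  have hlh := lowp_lt_highp (f := f) e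
  have hK : 0 < bigK G k := Nat.succ_pos _
  rcases Nat.eq_zero_or_pos j with rfl | hj0
  · rcases eq_or_lt_of_le (show 1 ≤ k from hk) with hk1 | hk1
    · rw [skey_seq_zero hk, show (0 + 1 : ℕ) = k from by omega, skey_seq_top hk]
      exact (Nat.mul_lt_mul_right hK).mpr hlh
    · rw [skey_seq_zero hk, skey_seq_mid e (by omega) (by omega)]
      omega
  · rcases eq_or_lt_of_le (show j + 1 ≤ k from hj) with hk1 | hk1
    · rw [hk1, skey_seq_top hk]
      calc skey k f (sseq k f e j) < (lowp f e + 1) * bigK G k := skey_mid_lt e hj0 hj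
        _ ≤ highp f e * bigK G k := Nat.mul_le_mul_right _ (by omega)
    · rw [skey_seq_mid e hj0 hj, skey_seq_mid e (by omega) hk1]
      omega

lemma skey_monoLe (hk : 1 ≤ k) (e : G.edgeSet) {a b : ℕ} (hab : a ≤ b) (hb : b ≤ k) :
    skey k f (sseq k f e a) ≤ skey k f (sseq k f e b) := by
  induction b with
  | zero => simp_all
  | succ n ih =>
    rcases eq_or_lt_of_le hab with rfl | h
    · exact le_rfl
    · exact le_trans (ih (by omega) (by omega)) (le_of_lt (skey_mono hk e (by omega)))

lemma skey_inj (hk : 1 ≤ k) : Function.Injective (skey (G := G) k f) := by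
  have hK : 0 < bigK G k := Nat.succ_pos _
  have hmod : ∀ (e : G.edgeSet) (t : Fin (k - 1)),
      (1 + eidx e * (k - 1) + (if fi f e ≤ fs f e then (t : ℕ) else k - 2 - (t : ℕ))) < bigK G k := by
    intro e t
    have he := eidx_lt e
    have ht : (t : ℕ) < k - 1 := t.isLt
    have hd : (if fi f e ≤ fs f e then (t : ℕ) else k - 2 - (t : ℕ)) < k - 1 := by
      split <;> omega
    have h3 : eidx e * (k - 1) + (k - 1) ≤ Nat.card G.edgeSet * (k - 1) := by
      have h4 : (eidx e + 1) * (k - 1) ≤ Nat.card G.edgeSet * (k - 1) :=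
        Nat.mul_le_mul_right _ (by omega)
      rw [add_mul, one_mul] at h4
      exact h4
    unfold bigK
    omega
  have hm : ∀ (e0 : G.edgeSet) (t0 : Fin (k - 1)),
      (lowp f e0 * bigK G k + 1 + eidx e0 * (k - 1) +
      (if fi f e0 ≤ fs f e0 then (t0 : ℕ) else k - 2 - (t0 : ℕ))) % bigK G k
      = 1 + eidx e0 * (k - 1) + (if fi f e0 ≤ fs f e0 then (t0 : ℕ) else k - 2 - (t0 : ℕ)) := by
    intro e0 t0
    rw [show lowp f e0 * bigK G k + 1 + eidx e0 * (k - 1) +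
      (if fi f e0 ≤ fs f e0 then (t0 : ℕ) else k - 2 - (t0 : ℕ))
      = (1 + eidx e0 * (k - 1) + (if fi f e0 ≤ fs f e0 then (t0 : ℕ) else k - 2 - (t0 : ℕ)))
        + lowp f e0 * bigK G k by ring]
    rw [Nat.add_mul_mod_self_right]
    exact Nat.mod_eq_of_lt (hmod e0 t0)
  rintro (v | ⟨e, t⟩) (w | ⟨e', t'⟩) h
  · simp only [skey] at h
    have := Nat.eq_of_mul_eq_mul_right hK h
    exact congrArg Sum.inl (f.injective (Fin.val_injective this))
  · exfalso
    simp only [skey] at h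
    have h1 : (f v : ℕ) * bigK G k % bigK G k = 0 := Nat.mul_mod_left _ _
    have h2 := hm e' t'
    rw [← h] at h2
    rw [h1] at h2
    omega
  · exfalso
    simp only [skey] at h
    have h1 : (f w : ℕ) * bigK G k % bigK G k = 0 := Nat.mul_mod_left _ _
    have h2 := hm e t
    rw [h] at h2
    rw [h1] at h2
    omega
  · simp only [skey] at h
    have hmodeq : (1 + eidx e * (k - 1) + (if fi f e ≤ fs f e then (t : ℕ) else k - 2 - (t : ℕ)))
        = (1 + eidx e' * (k - 1) + (if fi f e' ≤ fs f e' then (t' : ℕ) else k - 2 - (t' : ℕ))) := by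
      have := congrArg (· % bigK G k) h
      simpa only [hm] using this
    have ht : (t : ℕ) < k - 1 := t.isLt
    have ht' : (t' : ℕ) < k - 1 := t'.isLt
    have hd : (if fi f e ≤ fs f e then (t : ℕ) else k - 2 - (t : ℕ)) < k - 1 := by split <;> omega
    have hd' : (if fi f e' ≤ fs f e' then (t' : ℕ) else k - 2 - (t' : ℕ)) < k - 1 := by split <;> omega
    have hee : eidx e = eidx e' := by
      rcases lt_trichotomy (eidx e) (eidx e') with hlt | heq | hgt
      · exfalso
        have : (eidx e + 1) * (k - 1) ≤ eidx e' * (k - 1) :=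
          Nat.mul_le_mul_right _ (by omega)
        rw [add_mul, one_mul] at this
        omega
      · exact heq
      · exfalso
        have : (eidx e' + 1) * (k - 1) ≤ eidx e * (k - 1) :=
          Nat.mul_le_mul_right _ (by omega)
        rw [add_mul, one_mul] at this
        omega
    have he : e = e' := by
      have : Finite.equivFin G.edgeSet e = Finite.equivFin G.edgeSet e' :=
        Fin.val_injective hee
      exact (Finite.equivFin G.edgeSet).injective this
    subst he
    have htt : (t : ℕ) = (t' : ℕ) := by
      by_cases hc : fi f e ≤ fs f e
      · rw [if_pos hc, if_pos hc] at hmodeq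
        exact Nat.add_left_cancel hmodeq
      · rw [if_neg hc, if_neg hc] at hmodeq
        have := Nat.add_left_cancel hmodeq
        omega
    exact congrArg Sum.inr (Prod.ext rfl (Fin.val_injective htt))

lemma path_edge_eq_seq (hk : 1 ≤ k) (e : G.edgeSet) {j : ℕ} (hj : j < k) :
    ∃ a, a < k ∧ s(stretchNode G k e j, stretchNode G k e (j + 1))
      = s(sseq k f e a, sseq k f e (a + 1)) := by
  by_cases h : fi f e ≤ fs f e
  · exact ⟨j, hj, by unfold sseq; rw [if_pos h, if_pos h]⟩
  · refine ⟨k - 1 - j, by omega, ?_⟩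
    unfold sseq
    rw [if_neg h, if_neg h]
    have h1 : k - (k - 1 - j) = j + 1 := by omega
    have h2 : k - (k - 1 - j + 1) = j := by omega
    rw [h1, h2, Sym2.eq_swap]

lemma cross_orient (hk : 1 ≤ k) (e : G.edgeSet) {a : ℕ} (ha : a < k) {i : ℕ}
    {u v : V ⊕ (G.edgeSet × Fin (k - 1))}
    (huv : s(sseq k f e a, sseq k f e (a + 1)) = s(u, v))
    (h1 : skey k f u ≤ i) (h2 : i < skey k f v) :
    skey k f (sseq k f e a) ≤ i ∧ i < skey k f (sseq k f e (a + 1)) := by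
  rw [Sym2.eq_iff] at huv
  rcases huv with ⟨hu, hv⟩ | ⟨hu, hv⟩
  · subst hu; subst hv; exact ⟨h1, h2⟩
  · exfalso
    subst hu; subst hv
    have := skey_mono (f := f) hk e ha
    omega

end Construction

/-- For every finite simple graph `G` and integer `k ≥ 1`, the cutwidth of the
`k`-stretch satisfies `ctw(ᵏG) ≤ ctw(G)`. -/
theorem cutwidth_stretch_le {V : Type*} [Finite V] [LinearOrder V]
    (G : SimpleGraph V) (k : ℕ) (hk : 1 ≤ k) :
    cutwidth (stretch G k) ≤ cutwidth G := by

  obtain ⟨f, hf⟩ := exists_opt_order G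
  refine cutwidth_le_of_key (stretch G k) (skey k f) (skey_inj hk) (cutwidth G) (fun i => ?_)
  -- the crossing set of the stretch at cut i
  set S := {p | p ∈ (stretch G k).edgeSet ∧ ∃ u v, p = s(u, v) ∧ skey k f u ≤ i ∧ i < skey k f v}
    with hS
  set T := {e | e ∈ G.edgeSet ∧ ∃ u v, e = s(u, v) ∧ (f u : ℕ) ≤ i / bigK G k ∧
      i / bigK G k < (f v : ℕ)} with hT
  have hK : 0 < bigK G k := Nat.succ_pos _
  -- every p ∈ S is a path edge of some e and crosses between seq positions
  have hSchar : ∀ p ∈ S, ∃ (e : G.edgeSet) (a : ℕ), a < k ∧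
      p = s(sseq k f e a, sseq k f e (a + 1)) ∧
      skey k f (sseq k f e a) ≤ i ∧ i < skey k f (sseq k f e (a + 1)) := by
    rintro p ⟨hp1, u, v, rfl, h1, h2⟩
    simp only [stretch, SimpleGraph.edgeSet_fromEdgeSet, Set.mem_diff,
      Set.mem_setOf_eq] at hp1
    obtain ⟨⟨e, j, hj, hpe⟩, -⟩ := hp1
    obtain ⟨a, ha, hseq⟩ := path_edge_eq_seq (f := f) hk e hj
    obtain ⟨c1, c2⟩ := cross_orient hk e ha (hpe.trans hseq).symm h1 h2
    exact ⟨e, a, ha, hpe.trans hseq, c1, c2⟩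
  -- the map S → T
  have hmem : ∀ (e : G.edgeSet) (a : ℕ), a < k →
      skey k f (sseq k f e a) ≤ i → i < skey k f (sseq k f e (a + 1)) →
      (e : Sym2 V) ∈ T := by
    intro e a ha h1 h2
    have hlow : lowp f e * bigK G k ≤ i := by
      calc lowp f e * bigK G k = skey k f (sseq k f e 0) := (skey_seq_zero hk e).symm
        _ ≤ skey k f (sseq k f e a) := skey_monoLe hk e (Nat.zero_le _) (by omega)
        _ ≤ i := h1
    have hhigh : i < highp f e * bigK G k := by
      calc i < skey k f (sseq k f e (a + 1)) := h2
        _ ≤ skey k f (sseq k f e k) := skey_monoLe hk e (by omega) le_rfl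
        _ = highp f e * bigK G k := skey_seq_top hk e
    have hlow' : lowp f e ≤ i / bigK G k := (Nat.le_div_iff_mul_le hK).mpr hlow
    have hhigh' : i / bigK G k < highp f e := Nat.div_lt_iff_lt_mul hK |>.mpr hhigh
    have hlow2 : min (fi f e) (fs f e) ≤ i / bigK G k := hlow'
    have hhigh2 : i / bigK G k < max (fi f e) (fs f e) := hhigh'
    refine ⟨e.2, ?_⟩
    by_cases h : fi f e ≤ fs f e
    · rw [min_eq_left h] at hlow2
      rw [max_eq_right h] at hhigh2
      exact ⟨(e : Sym2 V).inf, (e : Sym2 V).sup, (sym2_mk_inf_sup _).symm, hlow2, hhigh2⟩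
    · rw [min_eq_right (le_of_not_ge h)] at hlow2
      rw [max_eq_left (le_of_not_ge h)] at hhigh2
      exact ⟨(e : Sym2 V).sup, (e : Sym2 V).inf,
        by rw [Sym2.eq_swap]; exact (sym2_mk_inf_sup _).symm, hlow2, hhigh2⟩
  -- injection from S to T
  have hcard : S.ncard ≤ T.ncard := by
    rw [← Nat.card_coe_set_eq, ← Nat.card_coe_set_eq]
    have hchoice : ∀ p : S, ∃ (e : G.edgeSet) (a : ℕ), a < k ∧
        (p : Sym2 _) = s(sseq k f e a, sseq k f e (a + 1)) ∧
        skey k f (sseq k f e a) ≤ i ∧ i < skey k f (sseq k f e (a + 1)) :=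
      fun p => hSchar p p.2
    choose ce ca hca hpeq hc1 hc2 using hchoice
    refine Nat.card_le_card_of_injective
      (fun p => ⟨(ce p : Sym2 V), hmem (ce p) (ca p) (hca p) (hc1 p) (hc2 p)⟩) ?_
    intro p q hpq
    have heq : ce p = ce q := Subtype.ext (by simpa using congrArg Subtype.val hpq)
    -- uniqueness of the crossing index
    have haeq : ca p = ca q := by
      by_contra hne
      have hcap := hca p; have hcaq := hca q
      rcases Nat.lt_or_ge (ca p) (ca q) with hlt | hge
      · have : skey k f (sseq k f (ce p) (ca p + 1)) ≤ skey k f (sseq k f (ce p) (ca q)) :=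
          skey_monoLe hk (ce p) (by omega) (by omega)
        have h1 := hc1 q; have h2 := hc2 p
        rw [← heq] at h1
        omega
      · have hlt : ca q < ca p := by omega
        have : skey k f (sseq k f (ce p) (ca q + 1)) ≤ skey k f (sseq k f (ce p) (ca p)) :=
          skey_monoLe hk (ce p) (by omega) (by omega)
        have h1 := hc1 p; have h2 := hc2 q
        rw [← heq] at h2
        omega
    have := hpeq p
    rw [heq, haeq, ← hpeq q] at this
    exact Subtype.ext this
  calc S.ncard ≤ T.ncard := hcard
    _ ≤ cutwidth G := hf (i / bigK G k)
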